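/- (Conditions on singular arcs.) Let B, C be Hermitian n×n matrices, let s : I → ℝ be a function on an open interval I, set H(t) := s(t)B + (1−s(t))C and D := [C,B], and let S : I → (Hermitian n×n matrices) be differentiable with Ṡ(t) = −i[H(t), S(t)] for all t ∈ I. Suppose Re Tr(B S(t)) = Re Tr(C S(t)) for all t ∈ I (a singular arc). Then for every t ∈ I: (a) Re Tr(D S(t)) = 0; and (b) (1 − s(t))·Re Tr([C,D] S(t)) + s(t)·Re Tr([B,D] S(t)) = 0. -/

import Mathlib

open Matrix

noncomputable section

attribute [local instance] Matrix.normedAddCommGroup Matrix.normedSpace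

namespace Stmt16

variable {n : ℕ}

/-- The superoperator `K_X(ρ) = −i[X, ρ]`. -/
def K (X ρ : Matrix (Fin n) (Fin n) ℂ) : Matrix (Fin n) (Fin n) ℂ :=
  (-Complex.I) • (X * ρ - ρ * X)

/-- The control Hamiltonian `H(v) = vB + (1−v)C`. -/
def Ham (B C : Matrix (Fin n) (Fin n) ℂ) (v : ℝ) : Matrix (Fin n) (Fin n) ℂ :=
  (v : ℂ) • B + (1 - (v : ℂ)) • C

/-- real part of `trace (X * ·)` as an ℝ-continuous-linear map. -/
def traceRe (X : Matrix (Fin n) (Fin n) ℂ) : Matrix (Fin n) (Fin n) ℂ →L[ℝ] ℝ :=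
  LinearMap.toContinuousLinearMap
    { toFun := fun M => (Matrix.trace (X * M)).re
      map_add' := by intro M N; simp [Matrix.mul_add]
      map_smul' := by intro r M; simp [Matrix.mul_smul, Complex.smul_re] }

/-- imaginary part of `trace (X * ·)` as an ℝ-continuous-linear map. -/
def traceIm (X : Matrix (Fin n) (Fin n) ℂ) : Matrix (Fin n) (Fin n) ℂ →L[ℝ] ℝ :=
  LinearMap.toContinuousLinearMap
    { toFun := fun M => (Matrix.trace (X * M)).im
      map_add' := by intro M N; simp [Matrix.mul_add]
      map_smul' := by intro r M; simp [Matrix.mul_smul, Complex.smul_im] }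

lemma hasDerivAt_traceRe (X : Matrix (Fin n) (Fin n) ℂ)
    {S : ℝ → Matrix (Fin n) (Fin n) ℂ} {S' : Matrix (Fin n) (Fin n) ℂ} {t : ℝ}
    (h : HasDerivAt S S' t) :
    HasDerivAt (fun u => (Matrix.trace (X * S u)).re) ((Matrix.trace (X * S')).re) t := by
  exact ((traceRe X).hasFDerivAt.comp_hasDerivAt t h)

lemma hasDerivAt_traceIm (X : Matrix (Fin n) (Fin n) ℂ)
    {S : ℝ → Matrix (Fin n) (Fin n) ℂ} {S' : Matrix (Fin n) (Fin n) ℂ} {t : ℝ}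
    (h : HasDerivAt S S' t) :
    HasDerivAt (fun u => (Matrix.trace (X * S u)).im) ((Matrix.trace (X * S')).im) t := by
  exact ((traceIm X).hasFDerivAt.comp_hasDerivAt t h)

lemma trace_mul_K (X H ρ : Matrix (Fin n) (Fin n) ℂ) :
    Matrix.trace (X * K H ρ) = -Complex.I * Matrix.trace ((X * H - H * X) * ρ) := by
  have hcyc : Matrix.trace (X * (ρ * H)) = Matrix.trace (H * X * ρ) := by
    rw [← Matrix.mul_assoc, Matrix.trace_mul_cycle]
  simp only [K, Matrix.mul_smul, Matrix.trace_smul, Matrix.mul_sub, Matrix.sub_mul,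
    Matrix.trace_sub, smul_eq_mul, hcyc, Matrix.mul_assoc]

lemma re_trace_skew {X ρ : Matrix (Fin n) (Fin n) ℂ} (hX : Xᴴ = -X) (hρ : ρ.IsHermitian) :
    (Matrix.trace (X * ρ)).re = 0 := by
  have h : star (Matrix.trace (X * ρ)) = -Matrix.trace (X * ρ) := by
    have : Matrix.trace ((X * ρ)ᴴ) = star (Matrix.trace (X * ρ)) := Matrix.trace_conjTranspose _
    rw [← this, Matrix.conjTranspose_mul, hX, hρ.eq, Matrix.mul_neg,
      Matrix.trace_neg, Matrix.trace_mul_comm]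
  have h2 := congrArg Complex.re h
  simp only [Complex.star_def, Complex.conj_re, Complex.neg_re] at h2
  linarith

lemma comm_Ham (X B C : Matrix (Fin n) (Fin n) ℂ) (v : ℝ) :
    X * Ham B C v - Ham B C v * X
      = (v : ℂ) • (X * B - B * X) + (1 - (v : ℂ)) • (X * C - C * X) := by
  simp only [Ham, Matrix.mul_add, Matrix.add_mul, Matrix.mul_smul, Matrix.smul_mul, smul_sub]
  abel

lemma deriv_zero_of_eq_zero {f : ℝ → ℝ} {d a b t : ℝ} (ht : t ∈ Set.Ioo a b)
    (hf : HasDerivAt f d t) (h0 : ∀ u ∈ Set.Ioo a b, f u = 0) : d = 0 := by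
  have hev : f =ᶠ[nhds t] fun _ => (0 : ℝ) :=
    Filter.eventuallyEq_of_mem (isOpen_Ioo.mem_nhds ht) h0
  have h2 : HasDerivAt (fun _ => (0 : ℝ)) d t := hf.congr_of_eventuallyEq hev.symm
  exact h2.unique (hasDerivAt_const t 0)

/-- **Conditions on singular arcs**: if the switching operator `S` satisfies
`Ṡ = −i[H(t), S]` on an open interval and `Re Tr(B S) ≡ Re Tr(C S)` there (a singular arc),
then with `D := [C,B]` one has `Re Tr(D S) ≡ 0` and
`(1−s)·Re Tr([C,D] S) + s·Re Tr([B,D] S) ≡ 0`. -/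
theorem singular_arc_conditions
    (B C : Matrix (Fin n) (Fin n) ℂ) (hB : B.IsHermitian) (hC : C.IsHermitian)
    (a b : ℝ) (s : ℝ → ℝ)
    (S : ℝ → Matrix (Fin n) (Fin n) ℂ)
    (hSHerm : ∀ t ∈ Set.Ioo a b, (S t).IsHermitian)
    (hSode : ∀ t ∈ Set.Ioo a b, HasDerivAt S (K (Ham B C (s t)) (S t)) t)
    (hsing : ∀ t ∈ Set.Ioo a b,
      (Matrix.trace (B * S t)).re = (Matrix.trace (C * S t)).re) :
    ∀ t ∈ Set.Ioo a b,
      (Matrix.trace ((C * B - B * C) * S t)).re = 0 ∧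
      (1 - s t) * (Matrix.trace ((C * (C * B - B * C) - (C * B - B * C) * C) * S t)).re +
        s t * (Matrix.trace ((B * (C * B - B * C) - (C * B - B * C) * B) * S t)).re = 0 := by
  set D : Matrix (Fin n) (Fin n) ℂ := C * B - B * C with hD
  have hDanti : Dᴴ = -D := by
    simp [hD, Matrix.conjTranspose_mul, hB.eq, hC.eq]
  -- part (a): algebraic, since D is skew-Hermitian and S t is Hermitian
  have parta : ∀ t ∈ Set.Ioo a b, (Matrix.trace (D * S t)).re = 0 := fun t ht =>
    re_trace_skew hDanti (hSHerm t ht)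
  -- the switching function Re Tr((B−C) S) vanishes on the singular arc
  have hψ : ∀ u ∈ Set.Ioo a b, (Matrix.trace ((B - C) * S u)).re = 0 := by
    intro u hu
    have h := hsing u hu
    simp [Matrix.sub_mul, Complex.sub_re, h]
  -- commutator of B - C with the Hamiltonian
  have hcomm1 : ∀ v : ℝ, (B - C) * Ham B C v - Ham B C v * (B - C) = -D := by
    intro v
    rw [comm_Ham]
    have h1 : (B - C) * B - B * (B - C) = -D := by
      simp only [hD, Matrix.sub_mul, Matrix.mul_sub, neg_sub]; abel
    have h2 : (B - C) * C - C * (B - C) = -D := by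
      simp only [hD, Matrix.sub_mul, Matrix.mul_sub, neg_sub]; abel
    rw [h1, h2, ← add_smul]
    have : (v : ℂ) + (1 - v) = 1 := by ring
    rw [this, one_smul]
  -- step 1: differentiating the switching function, Im Tr(D S) ≡ 0
  have hIm : ∀ u ∈ Set.Ioo a b, (Matrix.trace (D * S u)).im = 0 := by
    intro u hu
    have hd := hasDerivAt_traceRe (B - C) (hSode u hu)
    have hval : (Matrix.trace ((B - C) * K (Ham B C (s u)) (S u))).re
        = -(Matrix.trace (D * S u)).im := by
      rw [trace_mul_K, hcomm1]
      simp [Complex.mul_re]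
    rw [hval] at hd
    have := deriv_zero_of_eq_zero hu hd hψ
    linarith
  intro t ht
  refine ⟨parta t ht, ?_⟩
  -- step 2: differentiating Im Tr(D S) ≡ 0
  have hd := hasDerivAt_traceIm D (hSode t ht)
  have hval : (Matrix.trace (D * K (Ham B C (s t)) (S t))).im
      = s t * (Matrix.trace ((B * D - D * B) * S t)).re
        + (1 - s t) * (Matrix.trace ((C * D - D * C) * S t)).re := by
    rw [trace_mul_K, comm_Ham]
    have hb : D * B - B * D = -(B * D - D * B) := by abel
    have hc : D * C - C * D = -(C * D - D * C) := by abel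
    rw [hb, hc]
    simp only [smul_neg, ← smul_neg, Matrix.add_mul, Matrix.smul_mul, Matrix.neg_mul,
      Matrix.trace_add, Matrix.trace_smul, Matrix.trace_neg, smul_eq_mul]
    simp [Complex.mul_re, Complex.add_re, Complex.mul_im]
    ring
  rw [hval] at hd
  have hz := deriv_zero_of_eq_zero ht hd hIm
  linarith [hz]

end Stmt16
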